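/- For all integers k, j > 0 one has Kₖ ∘ W ∘ Kⱼ = −Kₖ₊ⱼ. -/

import Mathlib

open Complex MeasureTheory Metric

section Helpers

variable {E : Type*} [NormedRing E] [NormedAlgebra ℂ E] [CompleteSpace E]

theorem mul_circleIntegral' (A : E) (f : ℂ → E) (c : ℂ) (ρ : ℝ)
    (hf : CircleIntegrable f c ρ) :
    A * (∮ z in C(c, ρ), f z) = ∮ z in C(c, ρ), A * f z := by
  simp only [circleIntegral]
  have := (ContinuousLinearMap.mul ℂ E A).intervalIntegral_comp_comm hf.out
  simp only [ContinuousLinearMap.map_smul, ContinuousLinearMap.mul_apply'] at this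
  rw [← this]

theorem circleIntegral_mul' (B : E) (f : ℂ → E) (c : ℂ) (ρ : ℝ)
    (hf : CircleIntegrable f c ρ) :
    (∮ z in C(c, ρ), f z) * B = ∮ z in C(c, ρ), f z * B := by
  simp only [circleIntegral]
  have := ((ContinuousLinearMap.mul ℂ E).flip B).intervalIntegral_comp_comm hf.out
  simp only [ContinuousLinearMap.map_smul, ContinuousLinearMap.flip_apply,
    ContinuousLinearMap.mul_apply'] at this
  rw [← this]
  simp [ContinuousLinearMap.smul_apply, ContinuousLinearMap.mul_apply']

theorem circleIntegral_add' {F : Type*} [NormedAddCommGroup F] [NormedSpace ℂ F]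
    {f g : ℂ → F} {c : ℂ} {ρ : ℝ} (hf : CircleIntegrable f c ρ)
    (hg : CircleIntegrable g c ρ) :
    (∮ z in C(c, ρ), (f z + g z)) = (∮ z in C(c, ρ), f z) + ∮ z in C(c, ρ), g z := by
  simp only [circleIntegral, smul_add]
  exact intervalIntegral.integral_add hf.out hg.out

theorem circleIntegral_neg' {F : Type*} [NormedAddCommGroup F] [NormedSpace ℂ F]
    (f : ℂ → F) (c : ℂ) (ρ : ℝ) :
    (∮ z in C(c, ρ), -f z) = -∮ z in C(c, ρ), f z := by
  simp only [circleIntegral, smul_neg]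
  exact intervalIntegral.integral_neg

theorem circleIntegral_swap' {F : Type*} [NormedAddCommGroup F] [NormedSpace ℂ F]
    [CompleteSpace F] {r₁ r₂ : ℝ} {f : ℂ → ℂ → F}
    (hf : Continuous fun p : ℝ × ℝ => f (circleMap 0 r₁ p.1) (circleMap 0 r₂ p.2)) :
    (∮ v in C(0, r₁), ∮ u in C(0, r₂), f v u)
      = ∮ u in C(0, r₂), ∮ v in C(0, r₁), f v u := by
  simp only [circleIntegral, deriv_circleMap, ← intervalIntegral.integral_smul]
  have h2π : (0:ℝ) ≤ 2 * Real.pi := by positivity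
  have hG : Continuous fun p : ℝ × ℝ =>
      (circleMap 0 r₁ p.1 * Complex.I) • (circleMap 0 r₂ p.2 * Complex.I) •
        f (circleMap 0 r₁ p.1) (circleMap 0 r₂ p.2) := by
    apply Continuous.smul
    · exact ((continuous_circleMap 0 r₁).comp continuous_fst).mul continuous_const
    · apply Continuous.smul
      · exact ((continuous_circleMap 0 r₂).comp continuous_snd).mul continuous_const
      · exact hf
  rw [intervalIntegral.integral_of_le h2π, intervalIntegral.integral_of_le h2π]
  simp_rw [intervalIntegral.integral_of_le h2π]
  rw [MeasureTheory.integral_integral_swap]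
  · exact MeasureTheory.integral_congr_ae (.of_forall fun y =>
      MeasureTheory.integral_congr_ae (.of_forall fun x => smul_comm _ _ _))
  rw [Measure.prod_restrict]
  apply MeasureTheory.IntegrableOn.integrable
  apply MeasureTheory.IntegrableOn.mono_set
    (t := Set.Icc 0 (2*Real.pi) ×ˢ Set.Icc 0 (2*Real.pi))
  · exact hG.continuousOn.integrableOn_compact (isCompact_Icc.prod isCompact_Icc)
  · exact Set.prod_mono Set.Ioc_subset_Icc_self Set.Ioc_subset_Icc_self

theorem scalarS1 (R : ℝ) (u : ℂ) (hu : u ≠ 0) (huR : ‖u‖ < R) :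
    ∀ j : ℤ, 1 ≤ j → (∮ v in C(0, R), v ^ (-j) * (v - u)⁻¹) = 0 := by
  have hR : 0 < R := lt_of_le_of_lt (norm_nonneg u) huR
  have hu_ball : u ∈ ball (0:ℂ) R := by simpa [mem_ball, dist_eq_norm] using huR
  have h0_ball : (0:ℂ) ∈ ball (0:ℂ) R := mem_ball_self hR
  have hvne : ∀ v ∈ sphere (0:ℂ) R, v ≠ 0 ∧ v ≠ u := by
    intro v hv
    simp only [mem_sphere_iff_norm, sub_zero] at hv
    constructor
    · rintro rfl; simp only [norm_zero] at hv; exact hR.ne hv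
    · rintro rfl; exact huR.ne hv
  have hI1 : CircleIntegrable (fun v : ℂ => (v - u)⁻¹) 0 R := by
    apply ContinuousOn.circleIntegrable hR.le
    intro v hv
    exact (ContinuousAt.continuousWithinAt (by
      exact (continuous_id.sub continuous_const).continuousAt.inv₀
        (sub_ne_zero.2 (hvne v hv).2)))
  have hIzpow : ∀ m : ℤ, CircleIntegrable (fun v : ℂ => v ^ (-m)) 0 R := by
    intro m
    apply ContinuousOn.circleIntegrable hR.le
    intro v hv
    exact ((continuousAt_zpow₀ v (-m) (Or.inl (hvne v hv).1)).continuousWithinAt)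
  intro j
  refine Int.le_induction
    (motive := fun j _ => (∮ v in C(0, R), v ^ (-j) * (v - u)⁻¹) = 0) ?_ ?_ j
  · show (∮ v in C(0, R), v ^ (-(1:ℤ)) * (v - u)⁻¹) = 0
    have heq : Set.EqOn (fun v : ℂ => v ^ (-(1:ℤ)) * (v - u)⁻¹)
        (fun v : ℂ => u⁻¹ • ((v - u)⁻¹ - v⁻¹)) (sphere 0 R) := by
      intro v hv
      obtain ⟨h1, h2⟩ := hvne v hv
      have h3 : v - u ≠ 0 := sub_ne_zero.2 h2
      simp only [zpow_neg_one, smul_eq_mul]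
      field_simp
      ring
    rw [circleIntegral.integral_congr hR.le heq, circleIntegral.integral_smul,
      circleIntegral.integral_sub hI1 (by simpa using hIzpow 1),
      circleIntegral.integral_sub_inv_of_mem_ball hu_ball]
    have : (∮ v in C(0, R), v⁻¹) = 2 * Real.pi * I := by
      have := circleIntegral.integral_sub_inv_of_mem_ball h0_ball
      simpa using this
    rw [this]; simp
  · intro n hn ih
    have heq : Set.EqOn (fun v : ℂ => v ^ (-(n+1)) * (v - u)⁻¹)
        (fun v : ℂ => u⁻¹ • (v ^ (-n) * (v - u)⁻¹ - v ^ (-(n+1)))) (sphere 0 R) := by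
      intro v hv
      obtain ⟨h1, h2⟩ := hvne v hv
      have h3 : v - u ≠ 0 := sub_ne_zero.2 h2
      have e1 : v ^ (-(n+1)) = v ^ (-n) * v⁻¹ := by
        rw [← zpow_neg_one, ← zpow_add₀ h1]; ring_nf
      have hvn : v ^ n ≠ 0 := zpow_ne_zero _ h1
      simp only [smul_eq_mul, e1]
      field_simp
      ring
    have hInt : CircleIntegrable (fun v : ℂ => v ^ (-n) * (v - u)⁻¹) 0 R := by
      apply ContinuousOn.circleIntegrable hR.le
      intro v hv
      exact (((continuousAt_zpow₀ v (-n) (Or.inl (hvne v hv).1)).mul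
        ((continuous_id.sub continuous_const).continuousAt.inv₀
          (sub_ne_zero.2 (hvne v hv).2))).continuousWithinAt)
    rw [circleIntegral.integral_congr hR.le heq, circleIntegral.integral_smul,
      circleIntegral.integral_sub hInt (hIzpow (n+1)), ih]
    have : (∮ v in C(0, R), v ^ (-(n+1))) = 0 := by
      have := circleIntegral.integral_sub_zpow_of_ne
        (n := -(n+1)) (by omega) (0:ℂ) (0:ℂ) R
      simpa using this
    rw [this]; simp

theorem scalarS2 (ρ : ℝ) (hρ : 0 < ρ) (v : ℂ) (hv : ρ < ‖v‖) :
    ∀ k : ℤ, 1 ≤ k → (∮ u in C(0, ρ), u ^ (-k) * (v - u)⁻¹)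
      = 2 * Real.pi * I * v ^ (-k) := by
  have hv0 : v ≠ 0 := by
    intro h; rw [h] at hv; simp at hv; linarith
  have h0_ball : (0:ℂ) ∈ ball (0:ℂ) ρ := mem_ball_self hρ
  have hune : ∀ u ∈ sphere (0:ℂ) ρ, u ≠ 0 ∧ v - u ≠ 0 := by
    intro u hu
    simp only [mem_sphere_iff_norm, sub_zero] at hu
    constructor
    · rintro rfl; simp only [norm_zero] at hu; exact hρ.ne hu
    · intro h; rw [sub_eq_zero] at h; rw [h] at hv; exact absurd hu (by linarith)
  have houter : (∮ u in C(0, ρ), (v - u)⁻¹) = 0 := by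
    apply circleIntegral_eq_zero_of_differentiable_on_off_countable hρ.le
      Set.countable_empty
    · intro u hu
      have : v - u ≠ 0 := by
        intro h; rw [sub_eq_zero] at h; subst h
        simp only [mem_closedBall, dist_eq_norm, sub_zero] at hu; linarith
      exact ((continuous_const.sub continuous_id).continuousAt.inv₀ this).continuousWithinAt
    · intro u hu
      have : v - u ≠ 0 := by
        intro h; rw [sub_eq_zero] at h; subst h
        simp only [Set.mem_diff, mem_ball, dist_eq_norm, sub_zero] at hu; linarith [hu.1]
      exact (differentiableAt_const v |>.sub differentiableAt_id).inv this
  have hI1 : CircleIntegrable (fun u : ℂ => (v - u)⁻¹) 0 ρ := by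
    apply ContinuousOn.circleIntegrable hρ.le
    intro u hu
    exact ((continuous_const.sub continuous_id).continuousAt.inv₀ (hune u hu).2).continuousWithinAt
  have hIzpow : ∀ m : ℤ, CircleIntegrable (fun u : ℂ => u ^ (-m)) 0 ρ := by
    intro m
    apply ContinuousOn.circleIntegrable hρ.le
    intro u hu
    exact ((continuousAt_zpow₀ u (-m) (Or.inl (hune u hu).1)).continuousWithinAt)
  have hIcore : ∀ m : ℤ, CircleIntegrable (fun u : ℂ => u ^ (-m) * (v - u)⁻¹) 0 ρ := by
    intro m
    apply ContinuousOn.circleIntegrable hρ.le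
    intro u hu
    exact (((continuousAt_zpow₀ u (-m) (Or.inl (hune u hu).1)).mul
      ((continuous_const.sub continuous_id).continuousAt.inv₀
        (hune u hu).2)).continuousWithinAt)
  have hu1 : (∮ u in C(0, ρ), u⁻¹) = 2 * Real.pi * I := by
    have := circleIntegral.integral_sub_inv_of_mem_ball h0_ball
    simpa using this
  intro k
  refine Int.le_induction
    (motive := fun k _ => (∮ u in C(0, ρ), u ^ (-k) * (v - u)⁻¹) = 2 * Real.pi * I * v ^ (-k)) ?_ ?_ k
  · show (∮ u in C(0, ρ), u ^ (-(1:ℤ)) * (v - u)⁻¹) = 2 * Real.pi * I * v ^ (-(1:ℤ))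
    have heq : Set.EqOn (fun u : ℂ => u ^ (-(1:ℤ)) * (v - u)⁻¹)
        (fun u : ℂ => v⁻¹ • (u⁻¹ + (v - u)⁻¹)) (sphere 0 ρ) := by
      intro u hu
      obtain ⟨h1, h2⟩ := hune u hu
      simp only [zpow_neg_one, smul_eq_mul]
      field_simp
      ring
    rw [circleIntegral.integral_congr hρ.le heq, circleIntegral.integral_smul,
      circleIntegral_add' (by simpa using hIzpow 1) hI1, hu1, houter]
    simp [zpow_neg_one]; ring
  · intro n hn ih
    have heq : Set.EqOn (fun u : ℂ => u ^ (-(n+1)) * (v - u)⁻¹)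
        (fun u : ℂ => v⁻¹ • (u ^ (-(n+1)) + u ^ (-n) * (v - u)⁻¹)) (sphere 0 ρ) := by
      intro u hu
      obtain ⟨h1, h2⟩ := hune u hu
      have e1 : u ^ (-(n+1)) = u ^ (-n) * u⁻¹ := by
        rw [← zpow_neg_one, ← zpow_add₀ h1]; ring_nf
      have hun : u ^ n ≠ 0 := zpow_ne_zero _ h1
      simp only [smul_eq_mul, e1]
      field_simp
      ring
    have hz : (∮ u in C(0, ρ), u ^ (-(n+1))) = 0 := by
      have := circleIntegral.integral_sub_zpow_of_ne (n := -(n+1)) (by omega) (0:ℂ) (0:ℂ) ρ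
      simpa using this
    rw [circleIntegral.integral_congr hρ.le heq, circleIntegral.integral_smul,
      circleIntegral_add' (hIzpow (n+1)) (hIcore n), hz, ih]
    have e2 : v ^ (-(n+1)) = v ^ (-n) * v⁻¹ := by
      rw [← zpow_neg_one, ← zpow_add₀ hv0]; ring_nf
    rw [e2]
    field_simp
    rw [smul_eq_mul, zero_add, ← mul_assoc, mul_one_div_cancel hv0, one_mul]

end Helpers

/-- The `j`-th Laurent coefficient `K_j = (2πi)⁻¹ ∮_{|v|=r} v^(-j) R(v) dv` of the
resolvent function `R`. -/
noncomputable def laurentK {H : Type*} [NormedAddCommGroup H] [NormedSpace ℂ H]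
    (R : ℂ → (H →L[ℂ] H)) (r : ℝ) (j : ℤ) : H →L[ℂ] H :=
  (2 * (Real.pi : ℂ) * Complex.I)⁻¹ • ∮ v in C(0, r), v ^ (-j) • R v

/-- For all integers `k, j > 0` one has `Kₖ ∘ W ∘ Kⱼ = −Kₖ₊ⱼ`. -/
theorem laurentK_pos_comp_perturbation_comp_laurentK_pos
    {H : Type*} [NormedAddCommGroup H] [InnerProductSpace ℂ H] [CompleteSpace H]
    (N₀ W : H →L[ℂ] H) (z₀ : ℂ) (r : ℝ) (hr : 0 < r)
    (R : ℂ → (H →L[ℂ] H))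
    (hR : ∀ v : ℂ, v ≠ 0 → ‖v‖ ≤ r →
      (N₀ + v • W - z₀ • (1 : H →L[ℂ] H)) * R v = 1 ∧
      R v * (N₀ + v • W - z₀ • (1 : H →L[ℂ] H)) = 1)
    (k j : ℤ) (hk : 0 < k) (hj : 0 < j) :
    laurentK R r k * W * laurentK R r j = -(laurentK R r (k + j)) := by
  -- setup
  set ρ : ℝ := r / 2 with hρdef
  have hρ : 0 < ρ := by positivity
  have hρr : ρ < r := by rw [hρdef]; linarith
  set A : ℂ → (H →L[ℂ] H) := fun v => N₀ + v • W - z₀ • 1 with hAdef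
  set Rc : ℂ → (H →L[ℂ] H) := fun v => Ring.inverse (A v) with hRcdef
  have hUnit : ∀ v : ℂ, v ≠ 0 → ‖v‖ ≤ r → IsUnit (A v) := fun v h1 h2 =>
    ⟨⟨A v, R v, (hR v h1 h2).1, (hR v h1 h2).2⟩, rfl⟩
  have hRcR : ∀ v : ℂ, v ≠ 0 → ‖v‖ ≤ r → Rc v = R v := by
    intro v h1 h2
    have hAv : A v = ↑(⟨A v, R v, (hR v h1 h2).1, (hR v h1 h2).2⟩ : (H →L[ℂ] H)ˣ) := rfl
    show Ring.inverse (A v) = R v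
    rw [hAv, Ring.inverse_unit]
    rfl
  have hAcont : Continuous A := by
    apply Continuous.sub
    · exact continuous_const.add (continuous_id.smul continuous_const)
    · exact continuous_const
  have hAdiff : ∀ v : ℂ, DifferentiableAt ℂ A v := by
    intro v
    apply DifferentiableAt.sub
    · exact (differentiableAt_const _).add (differentiableAt_id.smul_const W)
    · exact differentiableAt_const _
  have hRcCt : ∀ v : ℂ, v ≠ 0 → ‖v‖ ≤ r → ContinuousAt Rc v := by
    intro v h1 h2
    obtain ⟨u, hu⟩ := hUnit v h1 h2
    have h3 : ContinuousAt Ring.inverse (A v) := hu ▸ NormedRing.inverse_continuousAt u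
    exact h3.comp hAcont.continuousAt
  have hRcDiff : ∀ v : ℂ, v ≠ 0 → ‖v‖ ≤ r → DifferentiableAt ℂ Rc v := fun v h1 h2 =>
    (hAdiff v).inverse (hUnit v h1 h2)
  have hsp : ∀ {s : ℝ}, 0 < s → s ≤ r → ∀ v ∈ sphere (0:ℂ) s, v ≠ 0 ∧ ‖v‖ ≤ r := by
    intro s hs hsr v hv
    simp only [mem_sphere_iff_norm, sub_zero] at hv
    refine ⟨fun h => ?_, hv.le.trans hsr⟩
    rw [h, norm_zero] at hv
    exact hs.ne hv
  -- resolvent identity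
  have hres : ∀ u v : ℂ, u ≠ 0 → ‖u‖ ≤ r → v ≠ 0 → ‖v‖ ≤ r → u ≠ v →
      Rc u * W * Rc v = (v - u)⁻¹ • (Rc u - Rc v) := by
    intro u v hu1 hu2 hv1 hv2 huv
    have hvu : v - u ≠ 0 := sub_ne_zero.2 (Ne.symm huv)
    have key : Rc u - Rc v = (v - u) • (Rc u * W * Rc v) := by
      rw [hRcR u hu1 hu2, hRcR v hv1 hv2]
      have h1 := (hR u hu1 hu2).2
      have h2 := (hR v hv1 hv2).1
      have e : A v - A u = (v - u) • W := by
        rw [hAdef]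
        simp only
        rw [sub_smul]
        abel
      calc R u - R v = R u * (A v * R v) - (R u * A u) * R v := by
            rw [h2, h1, mul_one, one_mul]
        _ = (R u * (A v - A u)) * R v := by noncomm_ring
        _ = (v - u) • (R u * W * R v) := by
            rw [e]
            simp only [mul_smul_comm, smul_mul_assoc]
    rw [key, smul_smul, inv_mul_cancel₀ hvu, one_smul]
  -- continuity / integrability of the basic integrands
  have hcOn : ∀ (m : ℤ) (s : ℝ), 0 < s → s ≤ r →
      ContinuousOn (fun v : ℂ => v ^ (-m) • Rc v) (sphere 0 s) := by
    intro m s hs hsr v hv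
    obtain ⟨h1, h2⟩ := hsp hs hsr v hv
    exact ((continuousAt_zpow₀ v (-m) (Or.inl h1)).smul (hRcCt v h1 h2)).continuousWithinAt
  have hInt1 : CircleIntegrable (fun u : ℂ => u ^ (-k) • Rc u) 0 ρ :=
    ContinuousOn.circleIntegrable hρ.le (hcOn k ρ hρ hρr.le)
  have hInt2 : CircleIntegrable (fun v : ℂ => v ^ (-j) • Rc v) 0 r :=
    ContinuousOn.circleIntegrable hr.le (hcOn j r hr le_rfl)
  have hInt3 : CircleIntegrable (fun u : ℂ => (u ^ (-k) • Rc u) * W) 0 ρ :=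
    ContinuousOn.circleIntegrable hρ.le ((hcOn k ρ hρ hρr.le).mul continuousOn_const)
  -- rewrite laurentK in terms of Rc
  have hKR : ∀ m : ℤ, laurentK R r m = laurentK Rc r m := by
    intro m
    unfold laurentK
    congr 1
    refine circleIntegral.integral_congr hr.le fun v hv => ?_
    obtain ⟨h1, h2⟩ := hsp hr le_rfl v hv
    rw [hRcR v h1 h2]
  -- change of radius for the k-th coefficient
  have hann : (∮ v in C(0, r), v ^ (-k) • Rc v) = ∮ u in C(0, ρ), u ^ (-k) • Rc u := by
    apply circleIntegral_eq_of_differentiable_on_annulus_off_countable hρ hρr.le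
      Set.countable_empty
    · intro v hv
      obtain ⟨hv1, hv2⟩ := hv
      have h1 : v ≠ 0 := by
        intro h; subst h; exact hv2 (mem_ball_self hρ)
      have h2 : ‖v‖ ≤ r := by simpa [mem_closedBall, dist_eq_norm] using hv1
      exact ((continuousAt_zpow₀ v (-k) (Or.inl h1)).smul (hRcCt v h1 h2)).continuousWithinAt
    · intro v hv
      simp only [Set.mem_diff] at hv
      obtain ⟨⟨hv1, hv2⟩, -⟩ := hv
      have h1 : v ≠ 0 := by
        intro h; subst h; exact hv2 (mem_closedBall_self hρ.le)
      have h2 : ‖v‖ ≤ r := by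
        have := mem_ball.mp hv1
        rw [dist_eq_norm, sub_zero] at this
        exact this.le
      exact (differentiableAt_zpow.mpr (Or.inl h1)).smul (hRcDiff v h1 h2)
  -- facts about points on the two circles
  have hsp_r : ∀ v ∈ sphere (0:ℂ) r, v ≠ 0 ∧ ‖v‖ ≤ r := hsp hr le_rfl
  have hsp_ρ : ∀ u ∈ sphere (0:ℂ) ρ, u ≠ 0 ∧ ‖u‖ ≤ r := hsp hρ hρr.le
  have hnorm_r : ∀ v ∈ sphere (0:ℂ) r, ‖v‖ = r := by
    intro v hv; simpa [mem_sphere_iff_norm] using hv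
  have hnorm_ρ : ∀ u ∈ sphere (0:ℂ) ρ, ‖u‖ = ρ := by
    intro u hu; simpa [mem_sphere_iff_norm] using hu
  -- step 1 : express the product as a double circle integral
  have e1 : (∮ u in C(0, ρ), u ^ (-k) • Rc u) * W * (∮ v in C(0, r), v ^ (-j) • Rc v)
      = ∮ v in C(0, r), ∮ u in C(0, ρ), (v ^ (-j) * u ^ (-k)) • (Rc u * W * Rc v) := by
    rw [circleIntegral_mul' W _ _ _ hInt1, mul_circleIntegral' _ _ _ _ hInt2]
    refine circleIntegral.integral_congr hr.le fun v _ => ?_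
    rw [mul_smul_comm, circleIntegral_mul' (Rc v) _ _ _ hInt3, ← circleIntegral.integral_smul]
    refine congrArg (fun f => circleIntegral f 0 ρ) (funext fun u => ?_)
    rw [smul_mul_assoc, smul_mul_assoc, smul_smul]
  -- continuity on the product of circles
  have hcm_r : Continuous fun p : ℝ × ℝ => circleMap 0 r p.1 :=
    (continuous_circleMap 0 r).comp continuous_fst
  have hcm_ρ : Continuous fun p : ℝ × ℝ => circleMap 0 ρ p.2 :=
    (continuous_circleMap 0 ρ).comp continuous_snd
  have hmem_r : ∀ θ : ℝ, circleMap 0 r θ ∈ sphere (0:ℂ) r := fun θ =>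
    circleMap_mem_sphere 0 hr.le θ
  have hmem_ρ : ∀ θ : ℝ, circleMap 0 ρ θ ∈ sphere (0:ℂ) ρ := fun θ =>
    circleMap_mem_sphere 0 hρ.le θ
  have hcRc_r : Continuous fun p : ℝ × ℝ => Rc (circleMap 0 r p.1) := by
    rw [continuous_iff_continuousAt]
    intro p
    exact ContinuousAt.comp (f := fun q : ℝ × ℝ => circleMap 0 r q.1)
      (hRcCt (circleMap 0 r p.1) (hsp_r _ (hmem_r p.1)).1 (hsp_r _ (hmem_r p.1)).2)
      hcm_r.continuousAt
  have hcRc_ρ : Continuous fun p : ℝ × ℝ => Rc (circleMap 0 ρ p.2) := by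
    rw [continuous_iff_continuousAt]
    intro p
    exact ContinuousAt.comp (f := fun q : ℝ × ℝ => circleMap 0 ρ q.2)
      (hRcCt (circleMap 0 ρ p.2) (hsp_ρ _ (hmem_ρ p.2)).1 (hsp_ρ _ (hmem_ρ p.2)).2)
      hcm_ρ.continuousAt
  have hczpow_r : Continuous fun p : ℝ × ℝ => (circleMap 0 r p.1) ^ (-j) := by
    rw [continuous_iff_continuousAt]
    intro p
    exact ContinuousAt.comp (f := fun q : ℝ × ℝ => circleMap 0 r q.1)
      (continuousAt_zpow₀ _ _ (Or.inl (hsp_r _ (hmem_r p.1)).1)) hcm_r.continuousAt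
  have hczpow_ρ : Continuous fun p : ℝ × ℝ => (circleMap 0 ρ p.2) ^ (-k) := by
    rw [continuous_iff_continuousAt]
    intro p
    exact ContinuousAt.comp (f := fun q : ℝ × ℝ => circleMap 0 ρ q.2)
      (continuousAt_zpow₀ _ _ (Or.inl (hsp_ρ _ (hmem_ρ p.2)).1)) hcm_ρ.continuousAt
  have hne_uv : ∀ p : ℝ × ℝ, circleMap 0 r p.1 - circleMap 0 ρ p.2 ≠ 0 := by
    intro p h
    rw [sub_eq_zero] at h
    have := hnorm_r _ (hmem_r p.1)
    rw [h, hnorm_ρ _ (hmem_ρ p.2)] at this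
    exact hρr.ne this
  have hcinv : Continuous fun p : ℝ × ℝ => (circleMap 0 r p.1 - circleMap 0 ρ p.2)⁻¹ :=
    (hcm_r.sub hcm_ρ).inv₀ hne_uv
  -- step 2 : swap the two integrals
  have e2 : (∮ v in C(0, r), ∮ u in C(0, ρ), (v ^ (-j) * u ^ (-k)) • (Rc u * W * Rc v))
      = ∮ u in C(0, ρ), ∮ v in C(0, r), (v ^ (-j) * u ^ (-k)) • (Rc u * W * Rc v) :=
    circleIntegral_swap' ((hczpow_r.mul hczpow_ρ).smul ((hcRc_ρ.mul continuous_const).mul hcRc_r))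
  -- step 3 : evaluate the inner integral over v for fixed u
  have eInner : ∀ u ∈ sphere (0:ℂ) ρ,
      (∮ v in C(0, r), (v ^ (-j) * u ^ (-k)) • (Rc u * W * Rc v))
        = -(∮ v in C(0, r), (v ^ (-j) * u ^ (-k) * (v - u)⁻¹) • Rc v) := by
    intro u hu
    obtain ⟨hu1, hu2⟩ := hsp_ρ u hu
    have huρ : ‖u‖ = ρ := hnorm_ρ u hu
    have hIa : CircleIntegrable (fun v : ℂ => (v ^ (-j) * u ^ (-k) * (v - u)⁻¹) • Rc u) 0 r := by
      apply ContinuousOn.circleIntegrable hr.le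
      intro v hv
      obtain ⟨hv1, hv2⟩ := hsp_r v hv
      have hvu : v - u ≠ 0 := by
        intro h; rw [sub_eq_zero] at h
        rw [← h, hnorm_r v hv] at huρ
        exact hρr.ne' huρ
      exact ((((continuousAt_zpow₀ v (-j) (Or.inl hv1)).mul continuousAt_const).mul
        ((continuous_id.sub continuous_const).continuousAt.inv₀ hvu)).smul
        continuousAt_const).continuousWithinAt
    have hIb : CircleIntegrable (fun v : ℂ => (v ^ (-j) * u ^ (-k) * (v - u)⁻¹) • Rc v) 0 r := by
      apply ContinuousOn.circleIntegrable hr.le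
      intro v hv
      obtain ⟨hv1, hv2⟩ := hsp_r v hv
      have hvu : v - u ≠ 0 := by
        intro h; rw [sub_eq_zero] at h
        rw [← h, hnorm_r v hv] at huρ
        exact hρr.ne' huρ
      exact ((((continuousAt_zpow₀ v (-j) (Or.inl hv1)).mul continuousAt_const).mul
        ((continuous_id.sub continuous_const).continuousAt.inv₀ hvu)).smul
        (hRcCt v hv1 hv2)).continuousWithinAt
    have hcongr : Set.EqOn (fun v : ℂ => (v ^ (-j) * u ^ (-k)) • (Rc u * W * Rc v))
        (fun v : ℂ => (v ^ (-j) * u ^ (-k) * (v - u)⁻¹) • Rc u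
          - (v ^ (-j) * u ^ (-k) * (v - u)⁻¹) • Rc v) (sphere 0 r) := by
      intro v hv
      obtain ⟨hv1, hv2⟩ := hsp_r v hv
      have huv : u ≠ v := by
        intro h
        rw [h, hnorm_r v hv] at huρ
        exact hρr.ne' huρ
      dsimp only
      rw [hres u v hu1 hu2 hv1 hv2 huv, smul_smul, smul_sub]
    rw [circleIntegral.integral_congr hr.le hcongr, circleIntegral.integral_sub hIa hIb,
      circleIntegral.integral_smul_const]
    have hzero : (∮ v in C(0, r), (v ^ (-j) * u ^ (-k) * (v - u)⁻¹)) = 0 := by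
      have hrw : ∀ v : ℂ, v ^ (-j) * u ^ (-k) * (v - u)⁻¹
          = u ^ (-k) • (v ^ (-j) * (v - u)⁻¹) := fun v => by
        rw [smul_eq_mul]; ring
      simp_rw [hrw]
      rw [circleIntegral.integral_smul,
        scalarS1 r u hu1 (by rw [huρ]; exact hρr) j (by omega), smul_zero]
    rw [hzero, zero_smul, zero_sub]
  have e3 : (∮ u in C(0, ρ), ∮ v in C(0, r), (v ^ (-j) * u ^ (-k)) • (Rc u * W * Rc v))
      = -(∮ u in C(0, ρ), ∮ v in C(0, r), (v ^ (-j) * u ^ (-k) * (v - u)⁻¹) • Rc v) := by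
    rw [← circleIntegral_neg']
    exact circleIntegral.integral_congr hρ.le fun u hu => eInner u hu
  -- step 4 : swap back
  have e4 : (∮ u in C(0, ρ), ∮ v in C(0, r), (v ^ (-j) * u ^ (-k) * (v - u)⁻¹) • Rc v)
      = ∮ v in C(0, r), ∮ u in C(0, ρ), (v ^ (-j) * u ^ (-k) * (v - u)⁻¹) • Rc v :=
    (circleIntegral_swap' (((hczpow_r.mul hczpow_ρ).mul hcinv).smul hcRc_r)).symm
  -- step 5 : evaluate the inner integral over u for fixed v
  have e5 : ∀ v ∈ sphere (0:ℂ) r,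
      (∮ u in C(0, ρ), (v ^ (-j) * u ^ (-k) * (v - u)⁻¹) • Rc v)
        = ((2 : ℂ) * Real.pi * I) • (v ^ (-(k + j)) • Rc v) := by
    intro v hv
    obtain ⟨hv1, hv2⟩ := hsp_r v hv
    have hnv : ‖v‖ = r := hnorm_r v hv
    rw [circleIntegral.integral_smul_const]
    have hscal : (∮ u in C(0, ρ), (v ^ (-j) * u ^ (-k) * (v - u)⁻¹))
        = v ^ (-j) * (2 * Real.pi * I * v ^ (-k)) := by
      have hrw : ∀ u : ℂ, v ^ (-j) * u ^ (-k) * (v - u)⁻¹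
          = v ^ (-j) • (u ^ (-k) * (v - u)⁻¹) := fun u => by
        rw [smul_eq_mul]; ring
      simp_rw [hrw]
      rw [circleIntegral.integral_smul, scalarS2 ρ hρ v (by rw [hnv]; exact hρr) k (by omega)]
      rfl
    rw [hscal, smul_smul]
    congr 1
    rw [show -(k + j) = -k + -j by ring, zpow_add₀ hv1]
    ring
  have e6 : (∮ v in C(0, r), ∮ u in C(0, ρ), (v ^ (-j) * u ^ (-k) * (v - u)⁻¹) • Rc v)
      = ((2 : ℂ) * Real.pi * I) • ∮ v in C(0, r), v ^ (-(k + j)) • Rc v := by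
    rw [← circleIntegral.integral_smul]
    exact circleIntegral.integral_congr hr.le fun v hv => e5 v hv
  -- put everything together
  have h2πi : (2 * (Real.pi : ℂ) * Complex.I) ≠ 0 := by
    simp [Real.pi_ne_zero, I_ne_zero]
  rw [hKR k, hKR j, hKR (k + j)]
  unfold laurentK
  rw [hann, smul_mul_assoc, smul_mul_assoc, mul_smul_comm, e1, e2, e3, e4, e6, smul_neg,
    smul_smul, inv_mul_cancel₀ h2πi, one_smul, smul_neg]
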